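/- Let F be a field of characteristic 2 and a, b, c, d ∈ F× with a common slot in their symbols: suppose {a,b}₂ = {e,f}₂ and {c,d}₂ = {e,g}₂ for some e, f, g ∈ F×. Then the 6-dimensional form ⟨a, b, ab, c, d, cd⟩ is isotropic over F. -/

import Mathlib

namespace Milnor

variable (F : Type*) [Field F]

/-- Relations defining the Milnor K-group `K_n(F)`: multiplicativity in each
slot and the Steinberg relation. -/
def rels (n : ℕ) : AddSubgroup (FreeAbelianGroup (Fin n → Fˣ)) :=
  AddSubgroup.closure
    ({ x | ∃ (i : Fin n) (u v w : Fin n → Fˣ),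
        (∀ j, j ≠ i → u j = v j ∧ u j = w j) ∧ w i = u i * v i ∧
        x = FreeAbelianGroup.of w - FreeAbelianGroup.of u - FreeAbelianGroup.of v } ∪
     { x | ∃ (i j : Fin n) (u : Fin n → Fˣ), i ≠ j ∧ (u i : F) + (u j : F) = 1 ∧
        x = FreeAbelianGroup.of u })

/-- The Milnor K-group `K_n(F)`. -/
def K (n : ℕ) := FreeAbelianGroup (Fin n → Fˣ) ⧸ rels F n

instance (n : ℕ) : AddCommGroup (K F n) :=
  QuotientAddGroup.Quotient.addCommGroup _

/-- The subgroup `2^m K_n(F)` of `K_n(F)`. -/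
def modSub (n m : ℕ) : AddSubgroup (K F n) :=
  AddSubgroup.closure { x | ∃ y : K F n, x = (2 ^ m) • y }

/-- The quotient `K_n(F)/2^m K_n(F)`. -/
def KMod (n m : ℕ) := K F n ⧸ modSub F n m

instance (n m : ℕ) : AddCommGroup (KMod F n m) :=
  QuotientAddGroup.Quotient.addCommGroup _

variable {F}

/-- The class of the symbol `{v 0, …, v (n-1)}` in `K_n(F)/2^m K_n(F)`. -/
def symbol {n : ℕ} (m : ℕ) (v : Fin n → Fˣ) : KMod F n m :=
  QuotientAddGroup.mk (QuotientAddGroup.mk (FreeAbelianGroup.of v) : K F n)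

open scoped Classical in
/-- `{a,b}` in `K₂(F)/2^m K₂(F)` for field elements, with junk value `0` if an
entry vanishes.  So `s2 1 a b` is `{a,b}₂` and `s2 2 a b` is `{a,b}₄`. -/
noncomputable def s2 (m : ℕ) (a b : F) : KMod F 2 m :=
  if h : a ≠ 0 ∧ b ≠ 0 then symbol m ![Units.mk0 a h.1, Units.mk0 b h.2] else 0

open scoped Classical in
/-- `{a,b,c,d}` in `K₄(F)/2^m K₄(F)` for field elements, junk value `0`. -/
noncomputable def s4 (m : ℕ) (a b c d : F) : KMod F 4 m :=
  if h : a ≠ 0 ∧ b ≠ 0 ∧ c ≠ 0 ∧ d ≠ 0 then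
    symbol m ![Units.mk0 a h.1, Units.mk0 b h.2.1, Units.mk0 c h.2.2.1, Units.mk0 d h.2.2.2]
  else 0

end Milnor

set_option maxHeartbeats 1000000


section
variable {F : Type*} [Field F] [CharP F 2]


def IsDer {F : Type*} [Field F] (D : F → F) : Prop :=
  (∀ x y : F, D (x + y) = D x + D y) ∧ ∀ x y : F, D (x * y) = x * D y + y * D x

lemma IsDer.map_zero' {F : Type*} [Field F] {D : F → F} (hD : IsDer D) : D 0 = 0 := by
  have h := hD.1 0 0
  simp only [add_zero] at h
  exact (left_eq_add.mp h)

lemma IsDer.map_one' {F : Type*} [Field F] {D : F → F} (hD : IsDer D) : D 1 = 0 := by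
  have h := hD.2 1 1
  simp only [mul_one, one_mul] at h
  exact (left_eq_add.mp h)

lemma IsDer.map_sq' {F : Type*} [Field F] [CharP F 2] {D : F → F} (hD : IsDer D) (x : F) :
    D (x * x) = 0 := by
  rw [hD.2 x x]
  exact CharTwo.add_self_eq_zero _

lemma two_eq_zero : (2 : F) = 0 := by
  exact_mod_cast CharP.cast_eq_zero F 2

/-- The subfield of squares. -/
def K0 (F : Type*) [Field F] [CharP F 2] : Subfield F where
  carrier := {z | ∃ s : F, z = s * s}
  zero_mem' := ⟨0, by ring⟩
  one_mem' := ⟨1, by ring⟩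
  add_mem' := by
    rintro x y ⟨s, rfl⟩ ⟨t, rfl⟩
    exact ⟨s + t, by linear_combination (-(s*t)) * (two_eq_zero (F := F))⟩
  mul_mem' := by
    rintro x y ⟨s, rfl⟩ ⟨t, rfl⟩
    exact ⟨s * t, by ring⟩
  neg_mem' := by
    rintro x ⟨s, rfl⟩
    exact ⟨s, by linear_combination (-(s*s)) * (two_eq_zero (F := F))⟩
  inv_mem' := by
    rintro x ⟨s, rfl⟩
    exact ⟨s⁻¹, by rw [mul_inv]⟩

def Ka (F : Type*) [Field F] [CharP F 2] (a : F) : Subfield F where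
  carrier := {z | ∃ s t : F, z = s * s + a * (t * t)}
  zero_mem' := ⟨0, 0, by ring⟩
  one_mem' := ⟨1, 0, by ring⟩
  add_mem' := by
    rintro x y ⟨s, t, rfl⟩ ⟨s', t', rfl⟩
    exact ⟨s + s', t + t', by linear_combination (-(a*t*t' + s*s')) * (two_eq_zero (F := F))⟩
  mul_mem' := by
    rintro x y ⟨s, t, rfl⟩ ⟨s', t', rfl⟩
    exact ⟨s*s' + a*(t*t'), s*t' + t*s', by
      linear_combination (-2*a*s*s'*t*t') * (two_eq_zero (F := F))⟩
  neg_mem' := by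
    rintro x ⟨s, t, rfl⟩
    exact ⟨s, t, by linear_combination (-(s*s + a*(t*t))) * (two_eq_zero (F := F))⟩
  inv_mem' := by
    rintro x ⟨s, t, rfl⟩
    by_cases hx : s * s + a * (t * t) = 0
    · exact ⟨0, 0, by rw [hx]; simp⟩
    · set z := s * s + a * (t * t) with hz
      refine ⟨s * z⁻¹, t * z⁻¹, ?_⟩
      have h1 : s * z⁻¹ * (s * z⁻¹) + a * (t * z⁻¹ * (t * z⁻¹)) = z⁻¹ * z⁻¹ * z := by
        rw [hz]; ring
      rw [h1, mul_assoc, inv_mul_cancel₀ hx, mul_one]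

def Kab (F : Type*) [Field F] [CharP F 2] (a b : F) : Subfield F where
  carrier := {z | ∃ s t u v : F, z = s*s + a*(t*t) + b*(u*u) + a*b*(v*v)}
  zero_mem' := ⟨0, 0, 0, 0, by ring⟩
  one_mem' := ⟨1, 0, 0, 0, by ring⟩
  add_mem' := by
    rintro x y ⟨s, t, u, v, rfl⟩ ⟨s', t', u', v', rfl⟩
    exact ⟨s + s', t + t', u + u', v + v', by
      linear_combination (-(a*b*v*v' + a*t*t' + b*u*u' + s*s')) * (two_eq_zero (F := F))⟩
  mul_mem' := by
    rintro x y ⟨s, t, u, v, rfl⟩ ⟨s', t', u', v', rfl⟩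
    refine ⟨s*s' + a*(t*t') + b*(u*u') + a*b*(v*v'),
           s*t' + t*s' + b*(u*v' + v*u'),
           s*u' + u*s' + a*(t*v' + v*t'),
           s*v' + v*s' + t*u' + u*t', ?_⟩
    linear_combination (-2)*(a*a*b*t*t'*v*v' + a*b*b*u*u'*v*v' + a*b*s*s'*v*v' + a*b*s*t*u'*v'
      + a*b*s*t'*u*v' + a*b*s*t'*u'*v + a*b*s'*t*u*v' + a*b*s'*t*u'*v + a*b*s'*t'*u*v
      + a*b*t*t'*u*u' + a*s*s'*t*t' + b*s*s'*u*u') * (two_eq_zero (F := F))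
  neg_mem' := by
    rintro x ⟨s, t, u, v, rfl⟩
    exact ⟨s, t, u, v, by
      linear_combination (-(s*s + a*(t*t) + b*(u*u) + a*b*(v*v))) * (two_eq_zero (F := F))⟩
  inv_mem' := by
    rintro x ⟨s, t, u, v, hx⟩
    by_cases h0 : x = 0
    · exact ⟨0, 0, 0, 0, by rw [h0]; simp⟩
    · refine ⟨s * x⁻¹, t * x⁻¹, u * x⁻¹, v * x⁻¹, ?_⟩
      have h1 : s * x⁻¹ * (s * x⁻¹) + a * (t * x⁻¹ * (t * x⁻¹)) + b * (u * x⁻¹ * (u * x⁻¹))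
          + a * b * (v * x⁻¹ * (v * x⁻¹))
          = x⁻¹ * x⁻¹ * (s*s + a*(t*t) + b*(u*u) + a*b*(v*v)) := by ring
      rw [h1, ← hx, mul_assoc, inv_mul_cancel₀ h0, mul_one]

lemma K0_le_Ka (a : F) : K0 F ≤ Ka F a := by
  rintro x ⟨s, rfl⟩; exact ⟨s, 0, by ring⟩

lemma Ka_le_Kab (a b : F) : Ka F a ≤ Kab F a b := by
  rintro x ⟨s, t, rfl⟩; exact ⟨s, t, 0, 0, by ring⟩

structure PDer (F : Type*) [Field F] [CharP F 2] where
  K : Subfield F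
  D : F → F
  mem_sq' : ∀ y : F, y * y ∈ K
  map_sq' : ∀ y : F, D (y * y) = 0
  map_add' : ∀ x ∈ K, ∀ y ∈ K, D (x + y) = D x + D y
  map_mul' : ∀ x ∈ K, ∀ y ∈ K, D (x * y) = x * D y + y * D x

namespace PDer

instance : Preorder (PDer F) where
  le p q := p.K ≤ q.K ∧ ∀ x ∈ p.K, p.D x = q.D x
  le_refl p := ⟨le_rfl, fun _ _ => rfl⟩
  le_trans p q r h h' := ⟨h.1.trans h'.1, fun x hx => (h.2 x hx).trans (h'.2 x (h.1 hx))⟩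

lemma le_def {p q : PDer F} : p ≤ q ↔ p.K ≤ q.K ∧ ∀ x ∈ p.K, p.D x = q.D x := Iff.rfl

lemma map_zero (p : PDer F) : p.D 0 = 0 := by
  have := p.map_sq' 0; simpa using this

lemma map_one (p : PDer F) : p.D 1 = 0 := by
  have := p.map_sq' 1; simpa using this

lemma extend (p : PDer F) {x : F} (hx : x ∉ p.K) (c : F) :
    ∃ q : PDer F, p ≤ q ∧ x ∈ q.K ∧ q.D x = c ∧
      ∀ z : F, z ∈ q.K ↔ ∃ u ∈ p.K, ∃ v ∈ p.K, z = u + v * x := by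
  classical
  have uniq : ∀ u ∈ p.K, ∀ v ∈ p.K, ∀ u' ∈ p.K, ∀ v' ∈ p.K,
      u + v * x = u' + v' * x → u = u' ∧ v = v' := by
    intro u hu v hv u' hu' v' hv' h
    by_cases hvv : v = v'
    · subst hvv
      exact ⟨by linear_combination h, rfl⟩
    · exfalso
      apply hx
      have hne : v - v' ≠ 0 := sub_ne_zero.mpr hvv
      have hxe : x = (u' - u) / (v - v') := by
        field_simp
        linear_combination h
      rw [hxe]
      exact Subfield.div_mem _ (Subfield.sub_mem _ hu' hu) (Subfield.sub_mem _ hv hv')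
  set S : Set F := {z | ∃ u ∈ p.K, ∃ v ∈ p.K, z = u + v * x} with hS
  have hxx : x * x ∈ p.K := p.mem_sq' x
  let Kq : Subfield F :=
  { carrier := S,
    zero_mem' := ⟨0, p.K.zero_mem, 0, p.K.zero_mem, by ring⟩,
    one_mem' := ⟨1, p.K.one_mem, 0, p.K.zero_mem, by ring⟩,
    add_mem' := by
      rintro z z' ⟨u, hu, v, hv, rfl⟩ ⟨u', hu', v', hv', rfl⟩
      exact ⟨u + u', p.K.add_mem hu hu', v + v', p.K.add_mem hv hv', by ring⟩,
    mul_mem' := by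
      rintro z z' ⟨u, hu, v, hv, rfl⟩ ⟨u', hu', v', hv', rfl⟩
      exact ⟨u * u' + v * v' * (x * x),
        p.K.add_mem (p.K.mul_mem hu hu') (p.K.mul_mem (p.K.mul_mem hv hv') hxx),
        u * v' + v * u', p.K.add_mem (p.K.mul_mem hu hv') (p.K.mul_mem hv hu'), by ring⟩,
    neg_mem' := by
      rintro z ⟨u, hu, v, hv, rfl⟩
      exact ⟨-u, p.K.neg_mem hu, -v, p.K.neg_mem hv, by ring⟩,
    inv_mem' := by
      rintro z ⟨u, hu, v, hv, rfl⟩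
      by_cases h0 : u + v * x = 0
      · exact ⟨0, p.K.zero_mem, 0, p.K.zero_mem, by rw [h0]; simp⟩
      · have hwK : u * u + (v * x) * (v * x) ∈ p.K :=
          p.K.add_mem (p.K.mul_mem hu hu) (p.mem_sq' (v * x))
        have hwz : u * u + (v * x) * (v * x) = (u + v * x) * (u + v * x) := by
          linear_combination (-(u * v * x)) * (two_eq_zero (F := F))
        have hw0 : u * u + (v * x) * (v * x) ≠ 0 := by
          rw [hwz]; exact mul_ne_zero h0 h0
        refine ⟨u * (u * u + (v * x) * (v * x))⁻¹, p.K.mul_mem hu (p.K.inv_mem hwK),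
                v * (u * u + (v * x) * (v * x))⁻¹, p.K.mul_mem hv (p.K.inv_mem hwK), ?_⟩
        have h1 : u * (u * u + (v * x) * (v * x))⁻¹
            + v * (u * u + (v * x) * (v * x))⁻¹ * x
            = (u * u + (v * x) * (v * x))⁻¹ * (u + v * x) := by ring
        rw [h1, hwz, mul_inv, mul_assoc, inv_mul_cancel₀ h0, mul_one] }
  have memKq : ∀ z : F, z ∈ Kq ↔ ∃ u ∈ p.K, ∃ v ∈ p.K, z = u + v * x := fun z => Iff.rfl
  let Dq : F → F := fun z =>
    if h : ∃ u ∈ p.K, ∃ v ∈ p.K, z = u + v * x then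
      p.D h.choose + x * p.D h.choose_spec.2.choose + h.choose_spec.2.choose * c
    else 0
  have Dspec : ∀ u ∈ p.K, ∀ v ∈ p.K, Dq (u + v * x) = p.D u + x * p.D v + v * c := by
    intro u hu v hv
    have h : ∃ u' ∈ p.K, ∃ v' ∈ p.K, u + v * x = u' + v' * x := ⟨u, hu, v, hv, rfl⟩
    have e1 : Dq (u + v * x) = p.D h.choose + x * p.D h.choose_spec.2.choose
        + h.choose_spec.2.choose * c := dif_pos h
    obtain ⟨hu0, v0, hv0, heq⟩ := h.choose_spec
    obtain ⟨e2, e3⟩ := uniq u hu v hv h.choose hu0 h.choose_spec.2.choose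
      h.choose_spec.2.choose_spec.1 h.choose_spec.2.choose_spec.2
    have e4 : p.D h.choose = p.D u := congrArg p.D e2.symm
    have e5 : p.D h.choose_spec.2.choose = p.D v := congrArg p.D e3.symm
    have e6 : h.choose_spec.2.choose * c = v * c := congrArg (fun y => y * c) e3.symm
    rw [e1, e4, e5, e6]
  have DqK : ∀ z ∈ p.K, Dq z = p.D z := by
    intro z hz
    have h1 : Dq (z + 0 * x) = p.D z + x * p.D 0 + 0 * c := Dspec z hz 0 p.K.zero_mem
    rw [zero_mul, add_zero] at h1
    rw [h1, p.map_zero]; ring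
  refine ⟨⟨Kq, Dq, ?_, ?_, ?_, ?_⟩, ⟨?_, ?_⟩, ?_, ?_, memKq⟩
  · -- mem_sq
    intro y
    exact ⟨y * y, p.mem_sq' y, 0, p.K.zero_mem, by ring⟩
  · -- map_sq
    intro y
    rw [DqK _ (p.mem_sq' y), p.map_sq']
  · -- map_add
    rintro z ⟨u, hu, v, hv, rfl⟩ z' ⟨u', hu', v', hv', rfl⟩
    have h1 : u + v * x + (u' + v' * x) = (u + u') + (v + v') * x := by ring
    rw [h1, Dspec _ (p.K.add_mem hu hu') _ (p.K.add_mem hv hv'),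
      Dspec u hu v hv, Dspec u' hu' v' hv',
      p.map_add' u hu u' hu', p.map_add' v hv v' hv']
    ring
  · -- map_mul
    rintro z ⟨u, hu, v, hv, rfl⟩ z' ⟨u', hu', v', hv', rfl⟩
    have h1 : (u + v * x) * (u' + v' * x)
        = (u * u' + v * v' * (x * x)) + (u * v' + v * u') * x := by ring
    have m1 : u * u' ∈ p.K := p.K.mul_mem hu hu'
    have m2 : v * v' * (x * x) ∈ p.K := p.K.mul_mem (p.K.mul_mem hv hv') hxx
    have m3 : u * v' ∈ p.K := p.K.mul_mem hu hv'
    have m4 : v * u' ∈ p.K := p.K.mul_mem hv hu'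
    rw [h1, Dspec _ (p.K.add_mem m1 m2) _ (p.K.add_mem m3 m4),
      Dspec u hu v hv, Dspec u' hu' v' hv',
      p.map_add' _ m1 _ m2, p.map_add' _ m3 _ m4,
      p.map_mul' u hu u' hu', p.map_mul' _ (p.K.mul_mem hv hv') _ hxx,
      p.map_mul' v hv v' hv', p.map_mul' u hu v' hv', p.map_mul' v hv u' hu',
      p.map_sq' x]
    linear_combination (-(c * v * v' * x)) * (two_eq_zero (F := F))
  · -- K ≤ Kq
    intro z hz
    exact ⟨z, hz, 0, p.K.zero_mem, by ring⟩
  · -- D agreement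
    intro z hz
    exact (DqK z hz).symm
  · -- x ∈ Kq
    exact ⟨0, p.K.zero_mem, 1, p.K.one_mem, by ring⟩
  · -- Dq x = c
    show Dq x = c
    have h1 : Dq (0 + 1 * x) = p.D 0 + x * p.D 1 + 1 * c := Dspec 0 p.K.zero_mem 1 p.K.one_mem
    rw [zero_add, one_mul] at h1
    rw [h1, p.map_zero, p.map_one]; ring

lemma exists_total (p : PDer F) :
    ∃ D : F → F, IsDer D ∧ ∀ x ∈ p.K, D x = p.D x := by
  classical
  have hub : ∀ c ⊆ Set.Ici p, IsChain (· ≤ ·) c → ∀ y ∈ c, ∃ ub, ∀ z ∈ c, z ≤ ub := by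
    intro c hc hchain y hy
    let KU : Subfield F :=
    { carrier := ⋃ q ∈ c, (q.K : Set F),
      zero_mem' := Set.mem_biUnion hy y.K.zero_mem,
      one_mem' := Set.mem_biUnion hy y.K.one_mem,
      add_mem' := by
        rintro z z' hz hz'
        obtain ⟨q1, hq1, hzq⟩ := Set.mem_iUnion₂.mp hz
        obtain ⟨q2, hq2, hzq'⟩ := Set.mem_iUnion₂.mp hz'
        rcases hchain.total hq1 hq2 with h | h
        · exact Set.mem_biUnion hq2 (q2.K.add_mem (h.1 hzq) hzq')
        · exact Set.mem_biUnion hq1 (q1.K.add_mem hzq (h.1 hzq')),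
      mul_mem' := by
        rintro z z' hz hz'
        obtain ⟨q1, hq1, hzq⟩ := Set.mem_iUnion₂.mp hz
        obtain ⟨q2, hq2, hzq'⟩ := Set.mem_iUnion₂.mp hz'
        rcases hchain.total hq1 hq2 with h | h
        · exact Set.mem_biUnion hq2 (q2.K.mul_mem (h.1 hzq) hzq')
        · exact Set.mem_biUnion hq1 (q1.K.mul_mem hzq (h.1 hzq')),
      neg_mem' := by
        rintro z hz
        obtain ⟨q1, hq1, hzq⟩ := Set.mem_iUnion₂.mp hz
        exact Set.mem_biUnion hq1 (q1.K.neg_mem hzq),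
      inv_mem' := by
        rintro z hz
        obtain ⟨q1, hq1, hzq⟩ := Set.mem_iUnion₂.mp hz
        exact Set.mem_biUnion hq1 (q1.K.inv_mem hzq) }
    have memKU : ∀ z : F, z ∈ KU ↔ ∃ q ∈ c, z ∈ q.K := by
      intro z
      constructor
      · intro hz
        obtain ⟨q, hq, hzq⟩ := Set.mem_iUnion₂.mp hz
        exact ⟨q, hq, hzq⟩
      · rintro ⟨q, hq, hzq⟩; exact Set.mem_biUnion hq hzq
    let DU : F → F := fun z => if h : ∃ q ∈ c, z ∈ q.K then h.choose.D z else 0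
    have DUspec : ∀ q ∈ c, ∀ z ∈ q.K, DU z = q.D z := by
      intro q hq z hz
      have h : ∃ q' ∈ c, z ∈ q'.K := ⟨q, hq, hz⟩
      have e1 : DU z = h.choose.D z := dif_pos h
      rcases hchain.total h.choose_spec.1 hq with h2 | h2
      · rw [e1, h2.2 z h.choose_spec.2]
      · rw [e1, ← h2.2 z hz]
    refine ⟨⟨KU, DU, ?_, ?_, ?_, ?_⟩, ?_⟩
    · intro z
      exact Set.mem_biUnion hy (y.mem_sq' z)
    · intro z
      rw [DUspec y hy _ (y.mem_sq' z), y.map_sq']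
    · intro z hz z' hz'
      obtain ⟨q1, hq1, hzq⟩ := Set.mem_iUnion₂.mp hz
      obtain ⟨q2, hq2, hzq'⟩ := Set.mem_iUnion₂.mp hz'
      rcases hchain.total hq1 hq2 with h | h
      · rw [DUspec q2 hq2 _ (q2.K.add_mem (h.1 hzq) hzq'), DUspec q2 hq2 _ (h.1 hzq),
          DUspec q2 hq2 _ hzq', q2.map_add' _ (h.1 hzq) _ hzq']
      · rw [DUspec q1 hq1 _ (q1.K.add_mem hzq (h.1 hzq')), DUspec q1 hq1 _ hzq,
          DUspec q1 hq1 _ (h.1 hzq'), q1.map_add' _ hzq _ (h.1 hzq')]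
    · intro z hz z' hz'
      obtain ⟨q1, hq1, hzq⟩ := Set.mem_iUnion₂.mp hz
      obtain ⟨q2, hq2, hzq'⟩ := Set.mem_iUnion₂.mp hz'
      rcases hchain.total hq1 hq2 with h | h
      · rw [DUspec q2 hq2 _ (q2.K.mul_mem (h.1 hzq) hzq'), DUspec q2 hq2 _ (h.1 hzq),
          DUspec q2 hq2 _ hzq', q2.map_mul' _ (h.1 hzq) _ hzq']
      · rw [DUspec q1 hq1 _ (q1.K.mul_mem hzq (h.1 hzq')), DUspec q1 hq1 _ hzq,
          DUspec q1 hq1 _ (h.1 hzq'), q1.map_mul' _ hzq _ (h.1 hzq')]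
    · intro q hq
      exact ⟨fun z hz => Set.mem_biUnion hq hz, fun z hz => (DUspec q hq z hz).symm⟩
  obtain ⟨m, hpm, hm⟩ := zorn_le_nonempty_Ici₀ p hub p le_rfl
  have htop : ∀ z : F, z ∈ m.K := by
    intro z
    by_contra hz
    obtain ⟨q, hmq, hxq, _, _⟩ := m.extend hz 0
    exact hz ((hm hmq).1 hxq)
  exact ⟨m.D, ⟨fun x y => m.map_add' x (htop x) y (htop y),
    fun x y => m.map_mul' x (htop x) y (htop y)⟩, fun x hx => (hpm.2 x hx).symm⟩

end PDer

def pder0 (F : Type*) [Field F] [CharP F 2] : PDer F where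
  K := K0 F
  D := 0
  mem_sq' := fun y => ⟨y, rfl⟩
  map_sq' := fun y => rfl
  map_add' := by intro x _ y _; simp
  map_mul' := by intro x _ y _; simp

lemma exists_der2 {a b : F} (ha : a ∉ K0 F) (hb : b ∉ Ka F a) (ca cb : F) :
    ∃ D : F → F, IsDer D ∧ D a = ca ∧ D b = cb := by
  obtain ⟨q1, hq1, haq1, hda, hmem1⟩ := (pder0 F).extend ha ca
  have hb1 : b ∉ q1.K := by
    intro hbq
    obtain ⟨u, ⟨s, rfl⟩, v, ⟨t, rfl⟩, heq⟩ := (hmem1 b).mp hbq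
    exact hb ⟨s, t, by rw [heq]; ring⟩
  obtain ⟨q2, hq2, hbq2, hdb, hmem2⟩ := q1.extend hb1 cb
  obtain ⟨D, hD, hagree⟩ := q2.exists_total
  exact ⟨D, hD, by rw [hagree a (hq2.1 haq1), ← hq2.2 a haq1, hda],
    by rw [hagree b hbq2, hdb]⟩

lemma mem_Kab_of_q2 {a b : F} {q1 q2 : PDer F}
    (hmem1 : ∀ z : F, z ∈ q1.K ↔ ∃ u ∈ K0 F, ∃ v ∈ K0 F, z = u + v * a)
    (hmem2 : ∀ z : F, z ∈ q2.K ↔ ∃ u ∈ q1.K, ∃ v ∈ q1.K, z = u + v * b) :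
    ∀ z : F, z ∈ q2.K → z ∈ Kab F a b := by
  intro z hz
  obtain ⟨u, hu, v, hv, rfl⟩ := (hmem2 z).mp hz
  obtain ⟨u1, ⟨s, rfl⟩, v1, ⟨t, rfl⟩, rfl⟩ := (hmem1 u).mp hu
  obtain ⟨u2, ⟨s', rfl⟩, v2, ⟨t', rfl⟩, rfl⟩ := (hmem1 v).mp hv
  exact ⟨s, t, s', t', by ring⟩

lemma exists_der3 {a b e : F} (ha : a ∉ K0 F) (hb : b ∉ Ka F a) (he : e ∉ Kab F a b)
    (ca cb ce : F) :
    ∃ D : F → F, IsDer D ∧ D a = ca ∧ D b = cb ∧ D e = ce := by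
  obtain ⟨q1, hq1, haq1, hda, hmem1⟩ := (pder0 F).extend ha ca
  have hb1 : b ∉ q1.K := by
    intro hbq
    obtain ⟨u, ⟨s, rfl⟩, v, ⟨t, rfl⟩, heq⟩ := (hmem1 b).mp hbq
    exact hb ⟨s, t, by rw [heq]; ring⟩
  obtain ⟨q2, hq2, hbq2, hdb, hmem2⟩ := q1.extend hb1 cb
  have he2 : e ∉ q2.K := fun hq => he (mem_Kab_of_q2 hmem1 hmem2 e hq)
  obtain ⟨q3, hq3, heq3, hde, hmem3⟩ := q2.extend he2 ce
  obtain ⟨D, hD, hagree⟩ := q3.exists_total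
  refine ⟨D, hD, ?_, ?_, ?_⟩
  · rw [hagree a (hq3.1 (hq2.1 haq1)), ← hq3.2 a (hq2.1 haq1), ← hq2.2 a haq1, hda]
  · rw [hagree b (hq3.1 hbq2), ← hq3.2 b hbq2, hdb]
  · rw [hagree e heq3, hde]

end


section Pairing
open Milnor
variable {F : Type*} [Field F] [CharP F 2]

noncomputable def pairFun (D D' : F → F) : (Fin 2 → Fˣ) → F := fun u =>
  (D (u 0) * D' (u 1) + D (u 1) * D' (u 0)) / ((u 0 : F) * ((u 1 : Fˣ) : F))

lemma pair_rels_le (D D' : F → F) (hD : IsDer D) (hD' : IsDer D') :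
    rels F 2 ≤ (FreeAbelianGroup.lift (pairFun D D')).ker := by
  rw [rels, AddSubgroup.closure_le]
  rintro x (⟨i, u, v, w, hjs, hw, rfl⟩ | ⟨i, j, u, hij, h1, rfl⟩)
  · simp only [SetLike.mem_coe, AddMonoidHom.mem_ker, map_sub, FreeAbelianGroup.lift_apply_of]
    have hu0 : ((u 0 : Fˣ) : F) ≠ 0 := (u 0).ne_zero
    have hu1 : ((u 1 : Fˣ) : F) ≠ 0 := (u 1).ne_zero
    have hv0 : ((v 0 : Fˣ) : F) ≠ 0 := (v 0).ne_zero
    have hv1 : ((v 1 : Fˣ) : F) ≠ 0 := (v 1).ne_zero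
    fin_cases i
    · have hw' : w 0 = u 0 * v 0 := hw
      have e1 : u 1 = v 1 := (hjs 1 (by decide)).1
      have e2 : u 1 = w 1 := (hjs 1 (by decide)).2
      have e0 : ((w 0 : Fˣ) : F) = ((u 0 : Fˣ) : F) * ((v 0 : Fˣ) : F) := by
        rw [hw']; rfl
      simp only [pairFun, ← e2, e0, ← congrArg Units.val e1]
      rw [hD.2, hD'.2]
      field_simp
      ring
    · have hw' : w 1 = u 1 * v 1 := hw
      have e1 : u 0 = v 0 := (hjs 0 (by decide)).1
      have e2 : u 0 = w 0 := (hjs 0 (by decide)).2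
      have e0 : ((w 1 : Fˣ) : F) = ((u 1 : Fˣ) : F) * ((v 1 : Fˣ) : F) := by
        rw [hw']; rfl
      simp only [pairFun, ← e2, e0, ← congrArg Units.val e1]
      rw [hD.2, hD'.2]
      field_simp
      ring
  · simp only [SetLike.mem_coe, AddMonoidHom.mem_ker, FreeAbelianGroup.lift_apply_of]
    have hu0 : ((u 0 : Fˣ) : F) ≠ 0 := (u 0).ne_zero
    have hu1 : ((u 1 : Fˣ) : F) ≠ 0 := (u 1).ne_zero
    have s1 : D ((u i : Fˣ) : F) + D ((u j : Fˣ) : F) = 0 := by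
      rw [← hD.1, h1, hD.map_one']
    have s2 : D' ((u i : Fˣ) : F) + D' ((u j : Fˣ) : F) = 0 := by
      rw [← hD'.1, h1, hD'.map_one']
    fin_cases i <;> fin_cases j
    · exact absurd rfl hij
    · have s1' : D ((u 0 : Fˣ) : F) + D ((u 1 : Fˣ) : F) = 0 := s1
      have s2' : D' ((u 0 : Fˣ) : F) + D' ((u 1 : Fˣ) : F) = 0 := s2
      simp only [pairFun]
      rw [div_eq_zero_iff]
      left
      linear_combination (D' ((u 1 : Fˣ) : F)) * s1' + (D ((u 1 : Fˣ) : F)) * s2'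
        - (D ((u 1 : Fˣ) : F) * D' ((u 1 : Fˣ) : F)) * (two_eq_zero (F := F))
    · have s1' : D ((u 1 : Fˣ) : F) + D ((u 0 : Fˣ) : F) = 0 := s1
      have s2' : D' ((u 1 : Fˣ) : F) + D' ((u 0 : Fˣ) : F) = 0 := s2
      simp only [pairFun]
      rw [div_eq_zero_iff]
      left
      linear_combination (D' ((u 0 : Fˣ) : F)) * s1' + (D ((u 0 : Fˣ) : F)) * s2'
        - (D ((u 0 : Fˣ) : F) * D' ((u 0 : Fˣ) : F)) * (two_eq_zero (F := F))
    · exact absurd rfl hij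

lemma pairing_eq (D D' : F → F) (hD : IsDer D) (hD' : IsDer D') {a b e f : F}
    (ha : a ≠ 0) (hb : b ≠ 0) (he : e ≠ 0) (hf : f ≠ 0)
    (h : s2 (F := F) 1 a b = s2 1 e f) :
    (D a * D' b + D b * D' a) / (a * b) = (D e * D' f + D f * D' e) / (e * f) := by
  classical
  let φ1 : K F 2 →+ F :=
    QuotientAddGroup.lift (rels F 2) (FreeAbelianGroup.lift (pairFun D D'))
      (pair_rels_le D D' hD hD')
  have hker2 : modSub F 2 1 ≤ φ1.ker := by
    rw [modSub, AddSubgroup.closure_le]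
    rintro x ⟨y, rfl⟩
    simp only [SetLike.mem_coe, AddMonoidHom.mem_ker, map_nsmul]
    rw [pow_one]
    rw [two_nsmul]
    rw [← two_mul, two_eq_zero (F := F), zero_mul]
  let φ2 : KMod F 2 1 →+ F := QuotientAddGroup.lift _ φ1 hker2
  have hs : ∀ (x y : F) (hx : x ≠ 0) (hy : y ≠ 0),
      φ2 (s2 1 x y) = (D x * D' y + D y * D' x) / (x * y) := by
    intro x y hx hy
    rw [s2, dif_pos ⟨hx, hy⟩]
    show φ2 (QuotientAddGroup.mk (QuotientAddGroup.mk
      (FreeAbelianGroup.of ![Units.mk0 x hx, Units.mk0 y hy]))) = _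
    rw [show φ2 (QuotientAddGroup.mk (QuotientAddGroup.mk
      (FreeAbelianGroup.of ![Units.mk0 x hx, Units.mk0 y hy])))
      = FreeAbelianGroup.lift (pairFun D D')
          (FreeAbelianGroup.of ![Units.mk0 x hx, Units.mk0 y hy]) from rfl,
      FreeAbelianGroup.lift_apply_of]
    simp [pairFun]
  rw [← hs a b ha hb, ← hs e f he hf, h]

end Pairing

section MainAlgebra
open Milnor
variable {F : Type*} [Field F] [CharP F 2]

lemma IsDer.eval4 {D : F → F} (hD : IsDer D) (a b s t u v : F) :
    D (s*s + a*(t*t) + b*(u*u) + a*b*(v*v))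
      = t*t*D a + u*u*D b + v*v*(a*D b + b*D a) := by
  have h1 : D (a*(t*t)) = t*t*D a := by rw [hD.2, hD.map_sq']; ring
  have h2 : D (b*(u*u)) = u*u*D b := by rw [hD.2, hD.map_sq']; ring
  have h3 : D (a*b*(v*v)) = v*v*(a*D b + b*D a) := by
    rw [hD.2, hD.map_sq' , hD.2]; ring
  rw [hD.1, hD.1, hD.1, hD.map_sq', h1, h2, h3]
  ring

lemma sq_unique {a : F} (ha : a ∉ K0 F) {s t : F} (h : s * s + a * (t * t) = 0) :
    s = 0 ∧ t = 0 := by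
  by_cases ht : t = 0
  · subst ht
    refine ⟨?_, rfl⟩
    have hs : s * s = 0 := by linear_combination h
    exact mul_self_eq_zero.mp hs
  · exfalso
    apply ha
    refine ⟨s / t, ?_⟩
    rw [div_mul_div_comm, eq_div_iff (mul_ne_zero ht ht)]
    linear_combination h - (s*s) * (two_eq_zero (F := F))

lemma quad_unique {a b : F} (ha : a ∉ K0 F) (hb : b ∉ Ka F a) {s t u v : F}
    (h : s*s + a*(t*t) + b*(u*u) + a*b*(v*v) = 0) :
    s = 0 ∧ t = 0 ∧ u = 0 ∧ v = 0 := by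
  have huv : u*u + a*(v*v) = 0 := by
    by_contra hne
    apply hb
    have hb' : b = (s*s + a*(t*t)) / (u*u + a*(v*v)) := by
      rw [eq_div_iff hne]
      linear_combination h - (s*s + a*(t*t)) * (two_eq_zero (F := F))
    rw [hb']
    exact Subfield.div_mem _ ⟨s, t, rfl⟩ ⟨u, v, rfl⟩
  obtain ⟨hu, hv⟩ := sq_unique ha huv
  subst hu; subst hv
  have h' : s*s + a*(t*t) = 0 := by linear_combination h
  obtain ⟨hs, ht⟩ := sq_unique ha h'
  exact ⟨hs, ht, rfl, rfl⟩

lemma isotropic_pure {a b : F} (ha : a ≠ 0) (hb : b ≠ 0)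
    (hdep : a ∈ K0 F ∨ b ∈ Ka F a) :
    ∃ x y z : F, ¬(x = 0 ∧ y = 0 ∧ z = 0) ∧ a*x^2 + b*y^2 + a*b*z^2 = 0 := by
  rcases hdep with ⟨α, hα⟩ | ⟨s, t, hst⟩
  · refine ⟨0, α, 1, by simp, ?_⟩
    rw [hα]
    linear_combination (b*α*α) * (two_eq_zero (F := F))
  · refine ⟨a*t^2 + s^2, a*t, s, ?_, ?_⟩
    · rintro ⟨h1, h2, h3⟩
      apply hb
      have ht : t = 0 := by
        rcases mul_eq_zero.mp h2 with h | h
        · exact absurd h ha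
        · exact h
      rw [hst, h3, ht]; ring
    · rw [hst]
      linear_combination (a^3*t^4 + 2*a^2*s^2*t^2 + a*s^4) * (two_eq_zero (F := F))

lemma represents {a b e f : F} (ha : a ≠ 0) (hb : b ≠ 0) (he : e ≠ 0) (hf : f ≠ 0)
    (hia : a ∉ K0 F) (hib : b ∉ Ka F a)
    (h : s2 (F := F) 1 a b = s2 1 e f) :
    ∃ t u v : F, e = a*(t*t) + b*(u*u) + a*b*(v*v) := by
  classical
  have hab0 : a * b ≠ 0 := mul_ne_zero ha hb
  have hef0 : e * f ≠ 0 := mul_ne_zero he hf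
  -- Step 1 : e ∈ Kab
  have heK : e ∈ Kab F a b := by
    by_contra heK
    obtain ⟨D1, hD1, d1a, d1b, d1e⟩ := exists_der3 hia hib heK 1 0 0
    obtain ⟨D2, hD2, d2a, d2b, d2e⟩ := exists_der3 hia hib heK 0 1 0
    obtain ⟨D3, hD3, d3a, d3b, d3e⟩ := exists_der3 hia hib heK 0 0 1
    have p31 := pairing_eq D3 D1 hD3 hD1 ha hb he hf h
    rw [d3a, d3b, d3e, d1e] at p31
    have hD1f : D1 f = 0 := by
      simp only [zero_mul, mul_zero, add_zero, zero_add, one_mul, mul_one, zero_div] at p31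
      rcases div_eq_zero_iff.mp p31.symm with h' | h'
      · exact h'
      · exact absurd h' hef0
    have p32 := pairing_eq D3 D2 hD3 hD2 ha hb he hf h
    rw [d3a, d3b, d3e, d2e] at p32
    have hD2f : D2 f = 0 := by
      simp only [zero_mul, mul_zero, add_zero, zero_add, one_mul, mul_one, zero_div] at p32
      rcases div_eq_zero_iff.mp p32.symm with h' | h'
      · exact h'
      · exact absurd h' hef0
    have p12 := pairing_eq D1 D2 hD1 hD2 ha hb he hf h
    rw [d1a, d1b, d2a, d2b, d1e, d2e, hD1f, hD2f] at p12
    simp only [mul_zero, zero_mul, mul_one, one_mul, add_zero, zero_add, zero_div] at p12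
    rcases div_eq_zero_iff.mp p12 with h' | h'
    · exact one_ne_zero h'
    · exact hab0 h'
  -- Step 2 : e ∉ K0
  have heK0 : e ∉ K0 F := by
    rintro ⟨σ, hσ⟩
    obtain ⟨D1, hD1, d1a, d1b⟩ := exists_der2 hia hib 1 0
    obtain ⟨D2, hD2, d2a, d2b⟩ := exists_der2 hia hib 0 1
    have p := pairing_eq D1 D2 hD1 hD2 ha hb he hf h
    have de1 : D1 e = 0 := by rw [hσ]; exact hD1.map_sq' σ
    have de2 : D2 e = 0 := by rw [hσ]; exact hD2.map_sq' σ
    rw [d1a, d1b, d2a, d2b, de1, de2] at p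
    simp only [mul_zero, zero_mul, mul_one, one_mul, add_zero, zero_add, zero_div] at p
    rcases div_eq_zero_iff.mp p with h' | h'
    · exact one_ne_zero h'
    · exact hab0 h'
  obtain ⟨s, t, u, v, hesp⟩ := heK
  -- Step 3 : f ∈ Kab
  have hfK : f ∈ Kab F a b := by
    by_contra hfK
    obtain ⟨E1, hE1, e1a, e1b, e1f⟩ := exists_der3 hia hib hfK 1 0 0
    obtain ⟨E2, hE2, e2a, e2b, e2f⟩ := exists_der3 hia hib hfK 0 1 0
    obtain ⟨E3, hE3, e3a, e3b, e3f⟩ := exists_der3 hia hib hfK 0 0 1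
    have q31 := pairing_eq E3 E1 hE3 hE1 ha hb he hf h
    rw [e3a, e3b, e3f, e1f] at q31
    have hE1e : E1 e = 0 := by
      simp only [zero_mul, mul_zero, add_zero, zero_add, one_mul, mul_one, zero_div] at q31
      rcases div_eq_zero_iff.mp q31.symm with h' | h'
      · exact h'
      · exact absurd h' hef0
    have q32 := pairing_eq E3 E2 hE3 hE2 ha hb he hf h
    rw [e3a, e3b, e3f, e2f] at q32
    have hE2e : E2 e = 0 := by
      simp only [zero_mul, mul_zero, add_zero, zero_add, one_mul, mul_one, zero_div] at q32
      rcases div_eq_zero_iff.mp q32.symm with h' | h'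
      · exact h'
      · exact absurd h' hef0
    rw [hesp, hE1.eval4, e1a, e1b] at hE1e
    rw [hesp, hE2.eval4, e2a, e2b] at hE2e
    have huv : u*u + a*(v*v) = 0 := by linear_combination hE2e
    obtain ⟨hu, hv⟩ := sq_unique hia huv
    have ht : t = 0 := by
      have : t * t = 0 := by rw [hv] at hE1e; linear_combination hE1e
      exact mul_self_eq_zero.mp this
    exact heK0 ⟨s, by rw [hesp, ht, hu, hv]; ring⟩
  obtain ⟨s', t', u', v', hfsp⟩ := hfK
  -- Step 4
  obtain ⟨Da, hDa, daa, dab⟩ := exists_der2 hia hib 1 0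
  obtain ⟨Db, hDb, dba, dbb⟩ := exists_der2 hia hib 0 1
  have dae : Da e = t*t + b*(v*v) := by
    rw [hesp, hDa.eval4, daa, dab]; ring
  have dbe : Db e = u*u + a*(v*v) := by
    rw [hesp, hDb.eval4, dba, dbb]; ring
  have daf : Da f = t'*t' + b*(v'*v') := by
    rw [hfsp, hDa.eval4, daa, dab]; ring
  have dbf : Db f = u'*u' + a*(v'*v') := by
    rw [hfsp, hDb.eval4, dba, dbb]; ring
  have p := pairing_eq Da Db hDa hDb ha hb he hf h
  rw [daa, dab, dba, dbb, dae, dbe, daf, dbf] at p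
  rw [div_eq_div_iff hab0 hef0] at p
  have big : (s*s' + a*(t*t') + b*(u*u') + a*b*(v*v'))*(s*s' + a*(t*t') + b*(u*u') + a*b*(v*v'))
      + a*((s*t'+t*s')*(s*t'+t*s')) + b*((s*u'+u*s')*(s*u'+u*s'))
      + a*b*((s*v'+v*s')*(s*v'+v*s')) = 0 := by
    linear_combination p - f * hesp - (s*s+a*(t*t)+b*(u*u)+a*b*(v*v)) * hfsp
      + (a*b*((t*t+b*(v*v))*(u'*u'+a*(v'*v')) + (t'*t'+b*(v'*v'))*(u*u+a*(v*v)))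
        + (-(a*a*b*b*v*v*v'*v') - a*a*b*t*t*v'*v' + a*a*b*t*t'*v*v' - a*a*b*t'*t'*v*v
          - a*b*b*u*u*v'*v' + a*b*b*u*u'*v*v' - a*b*b*u'*u'*v*v + 2*a*b*s*s'*v*v'
          - a*b*t*t*u'*u' + a*b*t*t'*u*u' - a*b*t'*t'*u*u + 2*a*s*s'*t*t'
          + 2*b*s*s'*u*u')) * (two_eq_zero (F := F))
  obtain ⟨hS, hT, hU, hV⟩ := quad_unique hia hib big
  by_cases hs : s = 0
  · exact ⟨t, u, v, by rw [hesp, hs]; ring⟩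
  · exfalso
    have hkey : s * (s' * e) = 0 := by
      linear_combination (s*s') * hesp + (s*s) * hS + (a*t*s) * hT + (b*u*s) * hU
        + (a*b*v*s) * hV
        + (-(a*b*s*s*v*v') - a*s*s*t*t' - b*s*s*u*u') * (two_eq_zero (F := F))
    have hs' : s' = 0 := by
      rcases mul_eq_zero.mp hkey with h' | h'
      · exact absurd h' hs
      rcases mul_eq_zero.mp h' with h' | h'
      · exact h'
      · exact absurd h' he
    apply hf
    rw [hs'] at hT hU hV
    have ht' : t' = 0 := by
      have : s * t' = 0 := by linear_combination hT
      rcases mul_eq_zero.mp this with h' | h'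
      · exact absurd h' hs
      · exact h'
    have hu' : u' = 0 := by
      have : s * u' = 0 := by linear_combination hU
      rcases mul_eq_zero.mp this with h' | h'
      · exact absurd h' hs
      · exact h'
    have hv' : v' = 0 := by
      have : s * v' = 0 := by linear_combination hV
      rcases mul_eq_zero.mp this with h' | h'
      · exact absurd h' hs
      · exact h'
    rw [hfsp, hs', ht', hu', hv']; ring

end MainAlgebra




open Milnor

/-- if `{a,b}₂` and `{c,d}₂` have a common slot, then the Albert
form `⟨a,b,ab,c,d,cd⟩` is isotropic. -/
theorem stmt15 (F : Type*) [Field F] [CharP F 2] (a b c d e f g : F)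
    (ha : a ≠ 0) (hb : b ≠ 0) (hc : c ≠ 0) (hd : d ≠ 0)
    (he : e ≠ 0) (hf : f ≠ 0) (hg : g ≠ 0)
    (hab : s2 1 a b = s2 1 e f) (hcd : s2 1 c d = s2 1 e g) :
    ∃ x : Fin 6 → F, x ≠ 0 ∧
      a * x 0 ^ 2 + b * x 1 ^ 2 + a * b * x 2 ^ 2 +
        c * x 3 ^ 2 + d * x 4 ^ 2 + c * d * x 5 ^ 2 = 0 := by
  by_cases hA : a ∈ K0 F ∨ b ∈ Ka F a
  · obtain ⟨x, y, z, hnz, heq⟩ := isotropic_pure ha hb hA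
    refine ⟨![x, y, z, 0, 0, 0], ?_, ?_⟩
    · intro h0
      exact hnz ⟨congrFun h0 0, congrFun h0 1, congrFun h0 2⟩
    · show a * x ^ 2 + b * y ^ 2 + a * b * z ^ 2 +
        c * (0:F) ^ 2 + d * (0:F) ^ 2 + c * d * (0:F) ^ 2 = 0
      linear_combination heq
  · by_cases hB : c ∈ K0 F ∨ d ∈ Ka F c
    · obtain ⟨x, y, z, hnz, heq⟩ := isotropic_pure hc hd hB
      refine ⟨![0, 0, 0, x, y, z], ?_, ?_⟩
      · intro h0
        exact hnz ⟨congrFun h0 3, congrFun h0 4, congrFun h0 5⟩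
      · show a * (0:F) ^ 2 + b * (0:F) ^ 2 + a * b * (0:F) ^ 2 +
          c * x ^ 2 + d * y ^ 2 + c * d * z ^ 2 = 0
        linear_combination heq
    · push_neg at hA hB
      obtain ⟨hia, hib⟩ := hA
      obtain ⟨hic, hid⟩ := hB
      obtain ⟨t, u, v, h1⟩ := represents ha hb he hf hia hib hab
      obtain ⟨t', u', v', h2⟩ := represents hc hd he hg hic hid hcd
      refine ⟨![t, u, v, t', u', v'], ?_, ?_⟩
      · intro h0
        apply he
        have ht : t = 0 := congrFun h0 0
        have hu : u = 0 := congrFun h0 1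
        have hv : v = 0 := congrFun h0 2
        rw [h1, ht, hu, hv]
        ring
      · show a * t ^ 2 + b * u ^ 2 + a * b * v ^ 2 +
          c * t' ^ 2 + d * u' ^ 2 + c * d * v' ^ 2 = 0
        linear_combination - h1 - h2 + e * (two_eq_zero (F := F))
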